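/- Let θ_k satisfy θ₁ = -nb/c and θ_{k+1} = α_{k,1} θ_{k-1} for 2 ≤ k ≤ n-2 with α_{k,l} as below. Then for all valid k ≥ 0, θ_{2k+1} = -(nb/c) · α_{2,k}, where α_{2,k} = [((2-n)/2)_k ((1-n-b)/4)_k ((1-b+c)/2)_k] / [(-b/2)_k ((3-b-n)/4)_k ((1-n-c)/2)_k]. -/

import Mathlib

open Finset Set

/-- Pochhammer symbol (rising factorial) `(a)_k` for real `a`. -/
noncomputable def poch (a : ℝ) (k : ℕ) : ℝ := (ascPochhammer ℝ k).eval a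

/-- Terminating hypergeometric polynomial `₂F₁(-n, b; c; z)`. -/
noncomputable def hyp (n : ℕ) (b c z : ℝ) : ℝ :=
  ∑ k ∈ Finset.range (n + 1),
    poch (-(n : ℝ)) k * poch b k / (poch c k * (k.factorial : ℝ)) * z ^ k

theorem stmt_9 (n : ℕ) (hn : 4 ≤ n) (b c : ℝ) (θ : ℕ → ℝ)
    (hθ1 : θ 1 = -((n : ℝ) * b) / c)
    (hθ2 : θ 2 = (b - c) * (n - 1) / (c * (b + n - 1)))
    (hrec : ∀ k : ℕ, 2 ≤ k → k ≤ n - 2 →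
      θ (k + 1) =
        (((k : ℝ) - n) / 2 * (((2 : ℝ) * k - n - b - 3) / 4) * (((k : ℝ) - b - 1 + c) / 2)) /
          ((((k : ℝ) - b - 2) / 2) * (((2 : ℝ) * k - b - 1 - n) / 4) *
            (((k : ℝ) - n - 1 - c) / 2)) * θ (k - 1)) :
    ∀ k : ℕ, k ≤ (n - 2) / 2 →
      θ (2 * k + 1) =
        -((n : ℝ) * b / c) *
          (poch ((2 - n) / 2) k * poch ((1 - n - b) / 4) k * poch ((1 - b + c) / 2) k) /
            (poch (-b / 2) k * poch ((3 - b - n) / 4) k * poch ((1 - n - c) / 2) k) := by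

  intro k hk
  induction k with
  | zero =>
    rw [hθ1]
    simp [poch, neg_div]
  | succ m ih =>
    have hm : m ≤ (n - 2) / 2 := by omega
    have h1 : 2 ≤ 2 * m + 2 := by omega
    have h2 : 2 * m + 2 ≤ n - 2 := by omega
    have hrec' := hrec (2 * m + 2) h1 h2
    have hidx : 2 * m + 2 - 1 = 2 * m + 1 := by omega
    rw [hidx] at hrec'
    have hgoal : 2 * (m + 1) + 1 = (2 * m + 2) + 1 := by ring
    rw [hgoal, hrec', ih hm]
    have hα : ((((2 * m + 2 : ℕ) : ℝ) - n) / 2 * (((2 : ℝ) * ((2 * m + 2 : ℕ) : ℝ) - n - b - 3) / 4) *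
          ((((2 * m + 2 : ℕ) : ℝ) - b - 1 + c) / 2)) /
        (((((2 * m + 2 : ℕ) : ℝ) - b - 2) / 2) * (((2 : ℝ) * ((2 * m + 2 : ℕ) : ℝ) - b - 1 - n) / 4) *
          ((((2 * m + 2 : ℕ) : ℝ) - n - 1 - c) / 2)) =
        (((2 - n) / 2 + m) * ((1 - n - b) / 4 + m) * ((1 - b + c) / 2 + m)) /
          ((-b / 2 + m) * ((3 - b - n) / 4 + m) * ((1 - n - c) / 2 + m)) := by
      congr 1 <;> push_cast <;> ring
    rw [hα, div_mul_div_comm]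
    simp only [poch, ascPochhammer_succ_eval]
    congr 1 <;> ring
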